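/- (Gronwall-type lemma, Lemma 2.16.) Let a ≤ b be real numbers, let u, v, w : ℝ → ℝ be functions on [a,b] such that u is nonnegative and Lebesgue integrable on [a,b], v is differentiable on [a,b] with derivative v' integrable on [a,b] (so that v(t) = v(a) + ∫_a^t v'(s) ds for all t ∈ [a,b]), and w is continuous on [a,b]. If w(t) ≤ v(t) + ∫_a^t u(s) w(s) ds for every t ∈ [a,b], then for every t ∈ [a,b], w(t) ≤ v(a) · exp(∫_a^t u(s) ds) + ∫_a^t exp(∫_s^t u(r) dr) · v'(s) ds. -/

import Mathlib

open MeasureTheory Set Filter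

lemma tri_fubini (a t : ℝ) (F : ℝ → ℝ → ℝ)
    (hF : Integrable (fun p : ℝ × ℝ => F p.1 p.2)
      ((volume.restrict (Ioc a t)).prod (volume.restrict (Ioc a t)))) :
    ∫ s in Ioc a t, (∫ r in Ioc a s, F r s) = ∫ r in Ioc a t, (∫ s in Ioc r t, F r s) := by
  have hT : MeasurableSet {q : ℝ × ℝ | q.1 ≤ q.2} :=
    measurableSet_le measurable_fst measurable_snd
  set H : ℝ × ℝ → ℝ := fun q => if q.1 ≤ q.2 then F q.1 q.2 else 0 with hHdef
  have hHeq : H = ({q : ℝ × ℝ | q.1 ≤ q.2}).indicator (fun p : ℝ × ℝ => F p.1 p.2) := by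
    funext q
    simp [hHdef, Set.indicator_apply, Set.mem_setOf_eq]
  have hHint : Integrable H ((volume.restrict (Ioc a t)).prod (volume.restrict (Ioc a t))) := by
    rw [hHeq]
    exact hF.indicator hT
  have inner1 : ∀ s ∈ Ioc a t, (∫ r in Ioc a t, H (r, s)) = ∫ r in Ioc a s, F r s := by
    intro s hs
    have e1 : (fun r => H (r, s)) = (Iic s).indicator (fun r => F r s) := by
      funext r
      simp [hHdef, Set.indicator_apply, Set.mem_Iic]
    rw [e1, integral_indicator measurableSet_Iic, Measure.restrict_restrict measurableSet_Iic]
    have hset : Iic s ∩ Ioc a t = Ioc a s := by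
      ext r
      constructor
      · rintro ⟨h1, h2, h3⟩; exact ⟨h2, h1⟩
      · rintro ⟨h1, h2⟩; exact ⟨h2, h1, h2.trans hs.2⟩
    rw [hset]
  have inner2 : ∀ r ∈ Ioc a t, (∫ s in Ioc a t, H (r, s)) = ∫ s in Ioc r t, F r s := by
    intro r hr
    have e1 : (fun s => H (r, s)) = (Ici r).indicator (fun s => F r s) := by
      funext s
      simp [hHdef, Set.indicator_apply, Set.mem_Ici]
    rw [e1, integral_indicator measurableSet_Ici, Measure.restrict_restrict measurableSet_Ici]
    have : Ici r ∩ Ioc a t = Icc r t := by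
      ext s
      constructor
      · rintro ⟨h1, h2, h3⟩; exact ⟨h1, h3⟩
      · rintro ⟨h1, h2⟩; exact ⟨h1, hr.1.trans_le h1, h2⟩
    rw [this, integral_Icc_eq_integral_Ioc]
  have swap : (∫ s in Ioc a t, ∫ r in Ioc a t, H (r, s))
      = ∫ r in Ioc a t, ∫ s in Ioc a t, H (r, s) := by
    have h := MeasureTheory.integral_integral_swap
      (f := fun (s r : ℝ) => H (r, s))
      (μ := volume.restrict (Ioc a t)) (ν := volume.restrict (Ioc a t)) ?_
    · exact h
    · have : Function.uncurry (fun (s r : ℝ) => H (r, s)) = H ∘ Prod.swap := rfl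
      rw [this]
      exact hHint.swap
  calc ∫ s in Ioc a t, (∫ r in Ioc a s, F r s)
      = ∫ s in Ioc a t, ∫ r in Ioc a t, H (r, s) :=
        (setIntegral_congr_fun measurableSet_Ioc (fun s hs => (inner1 s hs).symm))
    _ = ∫ r in Ioc a t, ∫ s in Ioc a t, H (r, s) := swap
    _ = ∫ r in Ioc a t, (∫ s in Ioc r t, F r s) :=
        setIntegral_congr_fun measurableSet_Ioc inner2

set_option maxHeartbeats 4000000 in
theorem stmt_0 (a b : ℝ) (hab : a ≤ b) (u v v' w : ℝ → ℝ)
    (hu_nonneg : ∀ t ∈ Icc a b, 0 ≤ u t)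
    (hu_int : IntegrableOn u (Icc a b))
    (hv_deriv : ∀ t ∈ Icc a b, HasDerivWithinAt v (v' t) (Icc a b) t)
    (hv'_int : IntegrableOn v' (Icc a b))
    (hv_ftc : ∀ t ∈ Icc a b, v t = v a + ∫ s in a..t, v' s)
    (hw_cont : ContinuousOn w (Icc a b))
    (hineq : ∀ t ∈ Icc a b, w t ≤ v t + ∫ s in a..t, u s * w s) :
    ∀ t ∈ Icc a b,
      w t ≤ v a * Real.exp (∫ s in a..t, u s)
        + ∫ s in a..t, Real.exp (∫ r in s..t, u r) * v' s := by
  -- the primitive of u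
  set U : ℝ → ℝ := fun x => ∫ r in Ioc a x, u r with hUdef
  have hsub : ∀ {s t : ℝ}, a ≤ s → t ≤ b → Ioc s t ⊆ Icc a b := by
    intro s t hs ht x hx
    exact ⟨hs.trans hx.1.le, hx.2.trans ht⟩
  have hu_int' : ∀ {s t : ℝ}, a ≤ s → t ≤ b → IntegrableOn u (Ioc s t) :=
    fun hs ht => hu_int.mono_set (hsub hs ht)
  have hUc : ContinuousOn U (Icc a b) := intervalIntegral.continuousOn_primitive hu_int
  have hUsub : ∀ {s t : ℝ}, a ≤ s → s ≤ t → t ≤ b → U t - U s = ∫ r in Ioc s t, u r := by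
    intro s t h1 h2 h3
    have hun : Ioc a s ∪ Ioc s t = Ioc a t := Ioc_union_Ioc_eq_Ioc h1 h2
    have := setIntegral_union (μ := volume) (f := u) (Set.Ioc_disjoint_Ioc_of_le le_rfl)
      measurableSet_Ioc (hu_int' le_rfl (h2.trans h3)) (hu_int' h1 h3)
    rw [hun] at this
    simp only [hUdef]
    rw [this]; ring
  have hUmono : ∀ {s t : ℝ}, a ≤ s → s ≤ t → t ≤ b → U s ≤ U t := by
    intro s t h1 h2 h3
    have h := hUsub h1 h2 h3
    have : 0 ≤ ∫ r in Ioc s t, u r :=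
      setIntegral_nonneg measurableSet_Ioc (fun x hx => hu_nonneg x (hsub h1 h3 hx))
    linarith
  have hUa : U a = 0 := by simp [hUdef]
  have hUnn : ∀ {t : ℝ}, a ≤ t → t ≤ b → 0 ≤ U t := by
    intro t h1 h2
    have := hUmono le_rfl h1 h2
    rw [hUa] at this; exact this
  have hUleb : ∀ {t : ℝ}, a ≤ t → t ≤ b → U t ≤ U b :=
    fun h1 h2 => hUmono h1 h2 le_rfl
  -- measurability helpers
  have hmeas : ∀ {φ : ℝ → ℝ}, ContinuousOn φ (Icc a b) → ∀ {s t : ℝ}, a ≤ s → t ≤ b →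
      AEStronglyMeasurable φ (volume.restrict (Ioc s t)) := by
    intro φ hφ s t hs ht
    exact (hφ.aestronglyMeasurable measurableSet_Icc).mono_measure
      (Measure.restrict_mono (hsub hs ht) le_rfl)
  have hmeas2 : ∀ {φ : ℝ × ℝ → ℝ}, ContinuousOn φ (Icc a b ×ˢ Icc a b) → ∀ {s t : ℝ}, a ≤ s → t ≤ b →
      AEStronglyMeasurable φ ((volume.restrict (Ioc s t)).prod (volume.restrict (Ioc s t))) := by
    intro φ hφ s t hs ht
    have h := hφ.aestronglyMeasurable (μ := volume.prod volume) (measurableSet_Icc.prod measurableSet_Icc)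
    refine h.mono_measure ?_
    rw [Measure.prod_restrict]
    exact Measure.restrict_mono (Set.prod_mono (hsub hs ht) (hsub hs ht)) le_rfl
  -- integrability of u times a bounded measurable function
  have key_int : ∀ {s t : ℝ}, a ≤ s → t ≤ b → ∀ (φ : ℝ → ℝ) (Cb : ℝ),
      AEStronglyMeasurable φ (volume.restrict (Ioc s t)) → (∀ x ∈ Ioc s t, |φ x| ≤ Cb) →
      IntegrableOn (fun x => u x * φ x) (Ioc s t) := by
    intro s t hs ht φ Cb hm hb
    have h := Integrable.bdd_mul (μ := volume.restrict (Ioc s t)) (c := Cb)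
      (hu_int' hs ht) hm
      (((ae_restrict_iff' measurableSet_Ioc).2 (ae_of_all _ (fun x hx => by
        rw [Real.norm_eq_abs]; exact hb x hx))))
    exact h.congr (ae_of_all _ (fun x => mul_comm _ _))
  have key_int2 : ∀ {s t : ℝ}, a ≤ s → t ≤ b → ∀ (φ : ℝ × ℝ → ℝ) (Cb : ℝ),
      AEStronglyMeasurable φ ((volume.restrict (Ioc s t)).prod (volume.restrict (Ioc s t))) →
      (∀ p : ℝ × ℝ, p.1 ∈ Ioc s t → p.2 ∈ Ioc s t → |φ p| ≤ Cb) →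
      Integrable (fun p : ℝ × ℝ => (u p.1 * u p.2) * φ p)
        ((volume.restrict (Ioc s t)).prod (volume.restrict (Ioc s t))) := by
    intro s t hs ht φ Cb hm hb
    have huu : Integrable (fun p : ℝ × ℝ => u p.1 * u p.2)
        ((volume.restrict (Ioc s t)).prod (volume.restrict (Ioc s t))) :=
      Integrable.mul_prod (hu_int' hs ht) (hu_int' hs ht)
    have hbd : ∀ᵐ p : ℝ × ℝ ∂((volume.restrict (Ioc s t)).prod (volume.restrict (Ioc s t))),
        ‖φ p‖ ≤ Cb := by
      rw [Measure.prod_restrict, ae_restrict_iff' (measurableSet_Ioc.prod measurableSet_Ioc)]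
      refine ae_of_all _ (fun p hp => ?_)
      rw [Real.norm_eq_abs]
      exact hb p hp.1 hp.2
    have h := Integrable.bdd_mul (c := Cb) huu hm hbd
    exact h.congr (ae_of_all _ (fun p => mul_comm _ _))
  -- continuity of basic building blocks
  have hvc : ContinuousOn v (Icc a b) := fun x hx => (hv_deriv x hx).continuousWithinAt
  -- the fundamental power identity, "forward" orientation
  have pow_id' : ∀ (n : ℕ), ∀ s t : ℝ, a ≤ s → s ≤ t → t ≤ b →
      ∫ r in Ioc s t, u r * (U r - U s) ^ n = (U t - U s) ^ (n + 1) / (n + 1) := by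
    intro n
    induction n with
    | zero =>
      intro s t hs hst ht
      simp only [pow_zero, mul_one, pow_one]
      rw [← hUsub hs hst ht]
      norm_num
    | succ n IH =>
      intro s t hs hst ht
      set X := ∫ r in Ioc s t, u r * (U r - U s) ^ (n + 1) with hX
      -- integrability facts
      have hφc : ∀ m : ℕ, ContinuousOn (fun x => (U x - U s) ^ m) (Icc a b) :=
        fun m => (hUc.sub continuousOn_const).pow m
      have hφb : ∀ m : ℕ, ∀ x, s ≤ x → x ≤ b → |(U x - U s) ^ m| ≤ (U b) ^ m := by
        intro m x hx1 hx2
        have h1 : 0 ≤ U x - U s := by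
          have := hUmono hs hx1 hx2; linarith
        have h2 : U x - U s ≤ U b := by
          have h3 := hUleb (hs.trans hx1) hx2
          have h4 := hUnn hs (hst.trans ht)
          linarith
        rw [abs_pow, abs_of_nonneg h1]
        exact pow_le_pow_left₀ h1 h2 m
      have hint : ∀ m : ℕ, ∀ s' t' : ℝ, s ≤ s' → t' ≤ b →
          IntegrableOn (fun x => u x * (U x - U s) ^ m) (Ioc s' t') := by
        intro m s' t' hs' ht'
        exact key_int (hs.trans hs') ht' _ ((U b) ^ m) (hmeas (hφc m) (hs.trans hs') ht')
          (fun x hx => hφb m x (hs'.trans hx.1.le) (hx.2.trans ht'))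
      -- Step 1: insert the inductive hypothesis inside the integral
      have step1 : X = ∫ r in Ioc s t, ((n : ℝ) + 1) *
          ∫ q in Ioc s r, (u q * u r) * (U q - U s) ^ n := by
        refine setIntegral_congr_fun measurableSet_Ioc (fun r hr => ?_)
        have e1 : ∫ q in Ioc s r, (u q * u r) * (U q - U s) ^ n
            = (∫ q in Ioc s r, u q * (U q - U s) ^ n) * u r := by
          rw [← integral_mul_const]
          exact setIntegral_congr_fun measurableSet_Ioc (fun q hq => by ring)
        rw [e1, IH s r hs hr.1.le (hr.2.trans ht)]
        have hne : ((n : ℝ) + 1) ≠ 0 := by positivity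
        field_simp
      have step2 : X = ((n : ℝ) + 1) * ∫ r in Ioc s t,
          ∫ q in Ioc s r, (u q * u r) * (U q - U s) ^ n := by
        rw [step1, integral_const_mul]
      have hFint : Integrable (fun p : ℝ × ℝ => (u p.1 * u p.2) * (U p.1 - U s) ^ n)
          ((volume.restrict (Ioc s t)).prod (volume.restrict (Ioc s t))) := by
        refine key_int2 hs ht _ ((U b) ^ n) (hmeas2 ?_ hs ht) ?_
        · exact ((hUc.comp continuous_fst.continuousOn (fun p hp => hp.1)).sub
            continuousOn_const).pow n
        · intro p hp1 _
          exact hφb n p.1 hp1.1.le (hp1.2.trans ht)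
      have step3 : X = ((n : ℝ) + 1) * ∫ q in Ioc s t,
          ∫ r in Ioc q t, (u q * u r) * (U q - U s) ^ n := by
        rw [step2, tri_fubini s t (fun q r => (u q * u r) * (U q - U s) ^ n) hFint]
      have step4 : X = ((n : ℝ) + 1) * ∫ q in Ioc s t,
          ((U t - U s) * (u q * (U q - U s) ^ n) - u q * (U q - U s) ^ (n + 1)) := by
        rw [step3]
        congr 1
        refine setIntegral_congr_fun measurableSet_Ioc (fun q hq => ?_)
        have e2 : ∫ r in Ioc q t, (u q * u r) * (U q - U s) ^ n
            = (∫ r in Ioc q t, u r) * (u q * (U q - U s) ^ n) := by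
          rw [← integral_mul_const]
          exact setIntegral_congr_fun measurableSet_Ioc (fun r hr => by ring)
        rw [e2, ← hUsub (hs.trans hq.1.le) hq.2 ht]
        ring
      have hsplit : (∫ q in Ioc s t,
          ((U t - U s) * (u q * (U q - U s) ^ n) - u q * (U q - U s) ^ (n + 1)))
          = (U t - U s) * ((U t - U s) ^ (n + 1) / ((n : ℝ) + 1)) - X := by
        rw [integral_sub ((hint n s t le_rfl ht).const_mul _) (hint (n + 1) s t le_rfl ht),
          integral_const_mul, IH s t hs hst ht]
      have final : X = ((n : ℝ) + 1) *
          ((U t - U s) * ((U t - U s) ^ (n + 1) / ((n : ℝ) + 1)) - X) := by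
        conv_lhs => rw [step4]
        rw [hsplit]
      have hne : ((n : ℝ) + 1) ≠ 0 := by positivity
      have hkey : ((n : ℝ) + 2) * X = (U t - U s) ^ (n + 2) := by
        have h1 : ((n : ℝ) + 1) * ((U t - U s) * ((U t - U s) ^ (n + 1) / ((n : ℝ) + 1)))
            = (U t - U s) ^ (n + 2) := by
          field_simp
          ring
        nlinarith [final]
      rw [eq_div_iff (by positivity)]
      push_cast
      linear_combination hkey
  -- the fundamental power identity, "backward" orientation
  have pow_id : ∀ (n : ℕ), ∀ s t : ℝ, a ≤ s → s ≤ t → t ≤ b →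
      ∫ r in Ioc s t, u r * (U t - U r) ^ n = (U t - U s) ^ (n + 1) / (n + 1) := by
    intro n
    induction n with
    | zero =>
      intro s t hs hst ht
      simp only [pow_zero, mul_one, pow_one]
      rw [← hUsub hs hst ht]
      norm_num
    | succ n IH =>
      intro s t hs hst ht
      set X := ∫ r in Ioc s t, u r * (U t - U r) ^ (n + 1) with hX
      have hφc : ∀ m : ℕ, ContinuousOn (fun x => (U t - U x) ^ m) (Icc a b) :=
        fun m => (continuousOn_const.sub hUc).pow m
      have hφb : ∀ m : ℕ, ∀ x, a ≤ x → x ≤ t → |(U t - U x) ^ m| ≤ (U b) ^ m := by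
        intro m x hx1 hx2
        have h1 : 0 ≤ U t - U x := by
          have := hUmono hx1 hx2 ht; linarith
        have h2 : U t - U x ≤ U b := by
          have h3 := hUleb (hs.trans hst) ht
          have h4 := hUnn hx1 (hx2.trans ht)
          linarith
        rw [abs_pow, abs_of_nonneg h1]
        exact pow_le_pow_left₀ h1 h2 m
      have hint : ∀ m : ℕ, ∀ s' t' : ℝ, a ≤ s' → t' ≤ t →
          IntegrableOn (fun x => u x * (U t - U x) ^ m) (Ioc s' t') := by
        intro m s' t' hs' ht'
        exact key_int hs' (ht'.trans ht) _ ((U b) ^ m) (hmeas (hφc m) hs' (ht'.trans ht))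
          (fun x hx => hφb m x (hs'.trans hx.1.le) (hx.2.trans ht'))
      have step1 : X = ∫ r in Ioc s t, ((n : ℝ) + 1) *
          ∫ q in Ioc r t, (u r * u q) * (U t - U q) ^ n := by
        refine setIntegral_congr_fun measurableSet_Ioc (fun r hr => ?_)
        have e1 : ∫ q in Ioc r t, (u r * u q) * (U t - U q) ^ n
            = (∫ q in Ioc r t, u q * (U t - U q) ^ n) * u r := by
          rw [← integral_mul_const]
          exact setIntegral_congr_fun measurableSet_Ioc (fun q hq => by ring)
        rw [e1, IH r t (hs.trans hr.1.le) hr.2 ht]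
        have hne : ((n : ℝ) + 1) ≠ 0 := by positivity
        field_simp
      have step2 : X = ((n : ℝ) + 1) * ∫ r in Ioc s t,
          ∫ q in Ioc r t, (u r * u q) * (U t - U q) ^ n := by
        rw [step1, integral_const_mul]
      have hFint : Integrable (fun p : ℝ × ℝ => (u p.1 * u p.2) * (U t - U p.2) ^ n)
          ((volume.restrict (Ioc s t)).prod (volume.restrict (Ioc s t))) := by
        refine key_int2 hs ht _ ((U b) ^ n) (hmeas2 ?_ hs ht) ?_
        · exact ((continuousOn_const.sub
            (hUc.comp continuous_snd.continuousOn (fun p hp => hp.2))).pow n)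
        · intro p _ hp2
          exact hφb n p.2 (hs.trans hp2.1.le) hp2.2
      have step3 : X = ((n : ℝ) + 1) * ∫ q in Ioc s t,
          ∫ r in Ioc s q, (u r * u q) * (U t - U q) ^ n := by
        rw [step2, ← tri_fubini s t (fun r q => (u r * u q) * (U t - U q) ^ n) hFint]
      have step4 : X = ((n : ℝ) + 1) * ∫ q in Ioc s t,
          ((U t - U s) * (u q * (U t - U q) ^ n) - u q * (U t - U q) ^ (n + 1)) := by
        rw [step3]
        congr 1
        refine setIntegral_congr_fun measurableSet_Ioc (fun q hq => ?_)
        have e2 : ∫ r in Ioc s q, (u r * u q) * (U t - U q) ^ n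
            = (∫ r in Ioc s q, u r) * (u q * (U t - U q) ^ n) := by
          rw [← integral_mul_const]
          exact setIntegral_congr_fun measurableSet_Ioc (fun r hr => by ring)
        rw [e2, ← hUsub hs hq.1.le (hq.2.trans ht)]
        ring
      have hsplit : (∫ q in Ioc s t,
          ((U t - U s) * (u q * (U t - U q) ^ n) - u q * (U t - U q) ^ (n + 1)))
          = (U t - U s) * ((U t - U s) ^ (n + 1) / ((n : ℝ) + 1)) - X := by
        rw [integral_sub ((hint n s t hs le_rfl).const_mul _) (hint (n + 1) s t hs le_rfl),
          integral_const_mul, IH s t hs hst ht]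
      have final : X = ((n : ℝ) + 1) *
          ((U t - U s) * ((U t - U s) ^ (n + 1) / ((n : ℝ) + 1)) - X) := by
        conv_lhs => rw [step4]
        rw [hsplit]
      have hne : ((n : ℝ) + 1) ≠ 0 := by positivity
      have hkey : ((n : ℝ) + 2) * X = (U t - U s) ^ (n + 2) := by
        have h1 : ((n : ℝ) + 1) * ((U t - U s) * ((U t - U s) ^ (n + 1) / ((n : ℝ) + 1)))
            = (U t - U s) ^ (n + 2) := by
          field_simp
          ring
        nlinarith [final]
      rw [eq_div_iff (by positivity)]
      push_cast
      linear_combination hkey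
  -- partial sums of the exponential series
  have hexp_sum : ∀ x : ℝ, Tendsto (fun n => ∑ k ∈ Finset.range n, x ^ k / (k.factorial : ℝ))
      atTop (nhds (Real.exp x)) := by
    intro x
    have hsm := (Real.summable_pow_div_factorial x).hasSum
    have hxe : Real.exp x = ∑' n : ℕ, x ^ n / (n.factorial : ℝ) := by
      rw [Real.exp_eq_exp_ℝ, NormedSpace.exp_eq_tsum_div]
    rw [hxe]
    exact hsm.tendsto_sum_nat
  -- the exponential integral identity
  have exp_id : ∀ s t : ℝ, a ≤ s → s ≤ t → t ≤ b →
      ∫ r in Ioc s t, u r * Real.exp (U t - U r) = Real.exp (U t - U s) - 1 := by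
    intro s t hs hst ht
    have hynn : ∀ x, a ≤ x → x ≤ t → 0 ≤ U t - U x := by
      intro x h1 h2
      have := hUmono h1 h2 ht; linarith
    have hyle : ∀ x, a ≤ x → x ≤ t → U t - U x ≤ U b := by
      intro x h1 h2
      have h3 := hUleb (hs.trans hst) ht
      have h4 := hUnn h1 (h2.trans ht)
      linarith
    have hintk : ∀ k : ℕ, IntegrableOn (fun r => u r * (U t - U r) ^ k) (Ioc s t) := by
      intro k
      refine key_int hs ht _ ((U b) ^ k) (hmeas ((continuousOn_const.sub hUc).pow k) hs ht) ?_
      intro x hx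
      rw [abs_pow, abs_of_nonneg (hynn x (hs.trans hx.1.le) hx.2)]
      exact pow_le_pow_left₀ (hynn x (hs.trans hx.1.le) hx.2) (hyle x (hs.trans hx.1.le) hx.2) k
    set G : ℕ → ℝ → ℝ :=
      fun n r => u r * ∑ k ∈ Finset.range n, (U t - U r) ^ k / (k.factorial : ℝ) with hG
    have h1 : ∀ n, ∫ r in Ioc s t, G n r
        = ∑ k ∈ Finset.range n, (U t - U s) ^ (k + 1) / ((k + 1).factorial : ℝ) := by
      intro n
      have e : ∀ r ∈ Ioc s t, G n r
          = ∑ k ∈ Finset.range n, (u r * (U t - U r) ^ k) * ((k.factorial : ℝ))⁻¹ := by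
        intro r _
        rw [hG]
        simp only [Finset.mul_sum]
        exact Finset.sum_congr rfl (fun k _ => by ring)
      rw [setIntegral_congr_fun measurableSet_Ioc e,
        integral_finset_sum _ (fun k _ => (hintk k).mul_const _)]
      refine Finset.sum_congr rfl (fun k _ => ?_)
      rw [integral_mul_const, pow_id k s t hs hst ht, Nat.factorial_succ]
      have hk1 : ((k.factorial : ℝ)) ≠ 0 := Nat.cast_ne_zero.2 k.factorial_ne_zero
      have hk2 : ((k : ℝ) + 1) ≠ 0 := by positivity
      push_cast
      field_simp
    have h2 : Tendsto (fun n => ∑ k ∈ Finset.range n, (U t - U s) ^ (k + 1) / ((k + 1).factorial : ℝ))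
        atTop (nhds (Real.exp (U t - U s) - 1)) := by
      have hre : ∀ n, ∑ k ∈ Finset.range n, (U t - U s) ^ (k + 1) / ((k + 1).factorial : ℝ)
          = (∑ j ∈ Finset.range (n + 1), (U t - U s) ^ j / (j.factorial : ℝ)) - 1 := by
        intro n
        rw [Finset.sum_range_succ' (fun j => (U t - U s) ^ j / (j.factorial : ℝ)) n]
        simp
      simp_rw [hre]
      have := ((hexp_sum (U t - U s)).comp (tendsto_add_atTop_nat 1)).sub_const 1
      exact this
    have h3 : Tendsto (fun n => ∫ r in Ioc s t, G n r) atTop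
        (nhds (∫ r in Ioc s t, u r * Real.exp (U t - U r))) := by
      refine tendsto_integral_of_dominated_convergence
        (fun r => |u r| * Real.exp (U b)) (fun n => ?_) ?_ (fun n => ?_) ?_
      · exact ((hu_int' hs ht).aestronglyMeasurable).mul
          (hmeas (continuousOn_finset_sum _
            (fun k (_ : k ∈ Finset.range n) =>
              ((continuousOn_const.sub hUc).pow k).div_const ((k.factorial : ℝ)))) hs ht)
      · exact ((hu_int' hs ht).abs).mul_const _
      · rw [ae_restrict_iff' measurableSet_Ioc]
        refine ae_of_all _ (fun x hx => ?_)
        have hy1 := hynn x (hs.trans hx.1.le) hx.2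
        have hy2 := hyle x (hs.trans hx.1.le) hx.2
        rw [hG, Real.norm_eq_abs, abs_mul]
        refine mul_le_mul_of_nonneg_left ?_ (abs_nonneg _)
        have hpos : 0 ≤ ∑ k ∈ Finset.range n, (U t - U x) ^ k / (k.factorial : ℝ) :=
          Finset.sum_nonneg (fun k _ => by positivity)
        rw [abs_of_nonneg hpos]
        exact (Real.sum_le_exp_of_nonneg hy1 n).trans (Real.exp_le_exp.2 hy2)
      · refine ae_of_all _ (fun x => ?_)
        exact (hexp_sum (U t - U x)).const_mul (u x)
    have h2' : Tendsto (fun n => ∫ r in Ioc s t, G n r) atTop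
        (nhds (Real.exp (U t - U s) - 1)) := by
      simp_rw [h1]; exact h2
    exact tendsto_nhds_unique h3 h2'
  -- bounds for w and v
  obtain ⟨Mw, hMw⟩ := isCompact_Icc.exists_bound_of_continuousOn hw_cont
  obtain ⟨Mv, hMv⟩ := isCompact_Icc.exists_bound_of_continuousOn hvc
  simp only [Real.norm_eq_abs] at hMw hMv
  have hMw0 : 0 ≤ Mw := le_trans (abs_nonneg _) (hMw a ⟨le_rfl, hab⟩)
  have hMv0 : 0 ≤ Mv := le_trans (abs_nonneg _) (hMv a ⟨le_rfl, hab⟩)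
  -- integrability of u times bounded measurable functions, on Icc
  have key_intI : ∀ (φ : ℝ → ℝ) (Cb : ℝ),
      AEStronglyMeasurable φ (volume.restrict (Icc a b)) → (∀ x ∈ Icc a b, |φ x| ≤ Cb) →
      IntegrableOn (fun x => u x * φ x) (Icc a b) := by
    intro φ Cb hm hb
    have h := Integrable.bdd_mul (μ := volume.restrict (Icc a b)) (c := Cb) hu_int hm
      (((ae_restrict_iff' measurableSet_Icc).2 (ae_of_all _ (fun x hx => by
        rw [Real.norm_eq_abs]; exact hb x hx))))
    exact h.congr (ae_of_all _ (fun x => mul_comm _ _))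
  have huw : IntegrableOn (fun x => u x * w x) (Icc a b) :=
    key_intI w Mw (hw_cont.aestronglyMeasurable measurableSet_Icc) hMw
  -- the inhomogeneous term
  set C : ℝ → ℝ := fun t => ∫ r in Ioc a t, u r * w r with hCdef
  have hCc : ContinuousOn C (Icc a b) := intervalIntegral.continuousOn_primitive huw
  -- generic bound for primitives
  have intbound : ∀ (g : ℝ → ℝ) (Cb : ℝ), 0 ≤ Cb → IntegrableOn g (Icc a b) →
      (∀ x ∈ Icc a b, |g x| ≤ |u x| * Cb) → ∀ t ∈ Icc a b,
      |∫ r in Ioc a t, g r| ≤ ∫ x in Icc a b, |u x| * Cb := by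
    intro g Cb hCb hgi hgb t ht
    have huCb : IntegrableOn (fun x => |u x| * Cb) (Icc a b) := hu_int.abs.mul_const Cb
    have h1 : |∫ r in Ioc a t, g r| ≤ ∫ r in Ioc a t, |g r| := by
      have := norm_integral_le_integral_norm (μ := volume.restrict (Ioc a t)) g
      simpa [Real.norm_eq_abs] using this
    have h2 : (∫ r in Ioc a t, |g r|) ≤ ∫ r in Ioc a t, |u r| * Cb := by
      refine setIntegral_mono_on ((hgi.mono_set (hsub le_rfl ht.2)).abs)
        (huCb.mono_set (hsub le_rfl ht.2)) measurableSet_Ioc ?_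
      exact fun x hx => hgb x (hsub le_rfl ht.2 hx)
    have h3 : (∫ r in Ioc a t, |u r| * Cb) ≤ ∫ x in Icc a b, |u x| * Cb := by
      refine setIntegral_mono_set huCb ?_ ((hsub le_rfl ht.2).eventuallyLE)
      refine (ae_restrict_iff' measurableSet_Icc).2 (ae_of_all _ (fun x _ => ?_))
      have h4 : (0:ℝ) ≤ |u x| := abs_nonneg _
      positivity
    linarith
  set M₀ : ℝ := ∫ x in Icc a b, |u x| * Mw with hM₀def
  have hCM : ∀ t ∈ Icc a b, |C t| ≤ M₀ := by
    intro t ht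
    exact intbound _ Mw hMw0 huw (fun x hx => by
      rw [abs_mul]
      exact mul_le_mul_of_nonneg_left (hMw x hx) (abs_nonneg _)) t ht
  have hwleC : ∀ r ∈ Icc a b, w r ≤ v r + C r := by
    intro r hr
    have h := hineq r hr
    rwa [intervalIntegral.integral_of_le hr.1] at h
  -- the Picard iterates
  obtain ⟨D, hD0, hDs⟩ : ∃ D : ℕ → ℝ → ℝ, (∀ t, D 0 t = M₀) ∧
      ∀ n t, D (n + 1) t = ∫ r in Ioc a t, u r * (v r + D n r) :=
    ⟨fun n => Nat.rec (fun _ => M₀) (fun _ Dn t => ∫ r in Ioc a t, u r * (v r + Dn r)) n,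
      fun _ => rfl, fun _ _ => rfl⟩
  have hDprop : ∀ n : ℕ, ContinuousOn (D n) (Icc a b) ∧
      ∃ Bn : ℝ, 0 ≤ Bn ∧ ∀ r ∈ Icc a b, |D n r| ≤ Bn := by
    intro n
    induction n with
    | zero =>
      refine ⟨?_, |M₀|, abs_nonneg _, fun r _ => ?_⟩
      · have : D 0 = fun _ => M₀ := funext hD0
        rw [this]; exact continuousOn_const
      · rw [hD0]
    | succ n IHn =>
      obtain ⟨hc, Bn, hBn0, hBn⟩ := IHn
      have hgi : IntegrableOn (fun r => u r * (v r + D n r)) (Icc a b) := by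
        refine key_intI _ (Mv + Bn) ((hvc.add hc).aestronglyMeasurable measurableSet_Icc) ?_
        intro x hx
        calc |v x + D n x| ≤ |v x| + |D n x| := abs_add_le _ _
          _ ≤ Mv + Bn := add_le_add (hMv x hx) (hBn x hx)
      have hDe : D (n + 1) = fun t => ∫ r in Ioc a t, u r * (v r + D n r) := funext (hDs n)
      refine ⟨by rw [hDe]; exact intervalIntegral.continuousOn_primitive hgi,
        ∫ x in Icc a b, |u x| * (Mv + Bn), ?_, ?_⟩
      · refine setIntegral_nonneg measurableSet_Icc (fun x _ => ?_)
        have : (0:ℝ) ≤ |u x| := abs_nonneg _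
        positivity
      · intro r hr
        rw [hDs n r]
        refine intbound _ (Mv + Bn) (by positivity) hgi (fun x hx => ?_) r hr
        rw [abs_mul]
        refine mul_le_mul_of_nonneg_left ?_ (abs_nonneg _)
        calc |v x + D n x| ≤ |v x| + |D n x| := abs_add_le _ _
          _ ≤ Mv + Bn := add_le_add (hMv x hx) (hBn x hx)
  have hCD : ∀ n : ℕ, ∀ t ∈ Icc a b, C t ≤ D n t := by
    intro n
    induction n with
    | zero =>
      intro t ht
      rw [hD0]
      exact (le_abs_self _).trans (hCM t ht)
    | succ n IHn =>
      intro t ht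
      rw [hDs n t]
      refine le_trans ?_ (setIntegral_mono_on (huw.mono_set (hsub le_rfl ht.2))
        ?_ measurableSet_Ioc ?_)
      · exact le_refl (C t)
      · obtain ⟨hc, Bn, hBn0, hBn⟩ := hDprop n
        refine (key_intI _ (Mv + Bn) ((hvc.add hc).aestronglyMeasurable measurableSet_Icc)
          (fun x hx => ?_)).mono_set (hsub le_rfl ht.2)
        calc |v x + D n x| ≤ |v x| + |D n x| := abs_add_le _ _
          _ ≤ Mv + Bn := add_le_add (hMv x hx) (hBn x hx)
      · intro x hx
        have hx' : x ∈ Icc a b := hsub le_rfl ht.2 hx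
        refine mul_le_mul_of_nonneg_left ?_ (hu_nonneg x hx')
        calc w x ≤ v x + C x := hwleC x hx'
          _ ≤ v x + D n x := by linarith [IHn x hx']
  have hUdiff : ∀ x y, x ∈ Icc a b → y ∈ Icc a b → |U x - U y| ≤ U b := by
    intro x y hx hy
    have h1 := hUnn hx.1 hx.2
    have h2 := hUleb hx.1 hx.2
    have h3 := hUnn hy.1 hy.2
    have h4 := hUleb hy.1 hy.2
    rw [abs_le]; constructor <;> linarith
  have huvφ : ∀ {t : ℝ}, t ≤ b → ∀ (ψ : ℝ → ℝ) (Cb : ℝ), ContinuousOn ψ (Icc a b) →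
      (∀ x ∈ Icc a b, |ψ x| ≤ Cb) →
      IntegrableOn (fun x => (u x * v x) * ψ x) (Ioc a t) := by
    intro t ht ψ Cb hψc hψb
    have h := key_int le_rfl ht (fun x => v x * ψ x) (Mv * Cb)
      (hmeas (hvc.mul hψc) le_rfl ht) (fun x hx => by
        rw [abs_mul]
        exact mul_le_mul (hMv x (hsub le_rfl ht hx)) (hψb x (hsub le_rfl ht hx))
          (abs_nonneg _) hMv0)
    exact h.congr (ae_of_all _ (fun x => by ring))
  have hψcont : ∀ (c : ℝ) (k : ℕ), ContinuousOn (fun x => (c - U x) ^ k / (k.factorial : ℝ))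
      (Icc a b) := fun c k => ((continuousOn_const.sub hUc).pow k).div_const _
  have hψbnd : ∀ (t : ℝ), t ∈ Icc a b → ∀ (k : ℕ), ∀ x ∈ Icc a b,
      |(U t - U x) ^ k / (k.factorial : ℝ)| ≤ (U b) ^ k := by
    intro t ht k x hx
    have h1 : |(U t - U x) ^ k| ≤ (U b) ^ k := by
      rw [abs_pow]
      exact pow_le_pow_left₀ (abs_nonneg _) (hUdiff t x ht hx) k
    have h2 : (1 : ℝ) ≤ (k.factorial : ℝ) := by exact_mod_cast k.factorial_pos
    rw [abs_div, abs_of_nonneg (by positivity : (0:ℝ) ≤ (k.factorial : ℝ))]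
    calc |(U t - U x) ^ k| / (k.factorial : ℝ) ≤ |(U t - U x) ^ k| :=
          div_le_self (abs_nonneg _) h2
      _ ≤ (U b) ^ k := h1
  -- closed form for the Picard iterates
  have hDclosed : ∀ n : ℕ, ∀ t ∈ Icc a b, D n t
      = (∑ k ∈ Finset.range n,
          ∫ x in Ioc a t, (u x * v x) * ((U t - U x) ^ k / (k.factorial : ℝ)))
        + M₀ * U t ^ n / (n.factorial : ℝ) := by
    intro n
    induction n with
    | zero =>
      intro t ht
      simp [hD0]
    | succ n IH =>
      intro t ht
      obtain ⟨hDnc, Bn, hBn0, hBn⟩ := hDprop n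
      have hta : a ≤ t := ht.1
      have htb : t ≤ b := ht.2
      set E : ℝ → ℝ → ℝ :=
        fun s r => ∑ k ∈ Finset.range n, (U r - U s) ^ k / (k.factorial : ℝ) with hEdef
      have hEbnd : ∀ s r, s ∈ Icc a b → r ∈ Icc a b → |E s r| ≤ Real.exp (U b) := by
        intro s r hsm hrm
        calc |E s r| ≤ ∑ k ∈ Finset.range n, |(U r - U s) ^ k / (k.factorial : ℝ)| :=
              Finset.abs_sum_le_sum_abs _ _
          _ = ∑ k ∈ Finset.range n, |U r - U s| ^ k / (k.factorial : ℝ) := by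
              refine Finset.sum_congr rfl (fun k _ => ?_)
              rw [abs_div, abs_pow, abs_of_nonneg (by positivity : (0:ℝ) ≤ (k.factorial : ℝ))]
          _ ≤ Real.exp |U r - U s| := Real.sum_le_exp_of_nonneg (abs_nonneg _) n
          _ ≤ Real.exp (U b) := Real.exp_le_exp.2 (hUdiff r s hrm hsm)
      -- rewrite of D n in integral form
      have hA : ∀ r ∈ Icc a b, D n r
          = (∫ s in Ioc a r, (u s * v s) * E s r) + M₀ * U r ^ n / (n.factorial : ℝ) := by
        intro r hr
        rw [IH r hr]
        congr 1
        rw [← integral_finset_sum _ (fun k _ =>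
          huvφ hr.2 _ ((U b) ^ k) (hψcont (U r) k) (hψbnd r hr k))]
        exact setIntegral_congr_fun measurableSet_Ioc (fun x _ => by rw [hEdef, Finset.mul_sum])
      -- integrability pieces
      have huv : IntegrableOn (fun x => u x * v x) (Ioc a t) :=
        key_int le_rfl htb v Mv (hmeas hvc le_rfl htb)
          (fun x hx => hMv x (hsub le_rfl htb hx))
      have huD : IntegrableOn (fun x => u x * D n x) (Ioc a t) :=
        key_int le_rfl htb (D n) Bn (hmeas hDnc le_rfl htb)
          (fun x hx => hBn x (hsub le_rfl htb hx))
      have hrem : IntegrableOn (fun r => u r * (M₀ * U r ^ n / (n.factorial : ℝ))) (Ioc a t) := by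
        refine key_int le_rfl htb _ (|M₀| * (U b) ^ n / (n.factorial : ℝ))
          (hmeas ((continuousOn_const.mul (hUc.pow n)).div_const _) le_rfl htb) ?_
        intro x hx
        have hx' := hsub le_rfl htb hx
        have h1 := hUnn hx'.1 hx'.2
        have h2 := hUleb hx'.1 hx'.2
        have h3 : (0:ℝ) < (n.factorial : ℝ) := by exact_mod_cast n.factorial_pos
        rw [abs_div, abs_mul, abs_of_nonneg (by positivity : (0:ℝ) ≤ U x ^ n),
          abs_of_nonneg h3.le]
        gcongr
      have hmain : IntegrableOn
          (fun r => u r * ∫ s in Ioc a r, (u s * v s) * E s r) (Ioc a t) := by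
        refine (huD.sub hrem).congr ?_
        refine (ae_restrict_iff' measurableSet_Ioc).2 (ae_of_all _ (fun r hr => ?_))
        simp only [Pi.sub_apply]
        rw [hA r (hsub le_rfl htb hr)]
        ring
      -- Fubini for the main term
      have hFint : Integrable
          (fun p : ℝ × ℝ => (u p.1 * u p.2) * (v p.1 * E p.1 p.2))
          ((volume.restrict (Ioc a t)).prod (volume.restrict (Ioc a t))) := by
        refine key_int2 le_rfl htb _ (Mv * Real.exp (U b)) (hmeas2 ?_ le_rfl htb) ?_
        · refine (hvc.comp continuous_fst.continuousOn (fun p hp => hp.1)).mul ?_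
          refine continuousOn_finset_sum _ (fun k _ => ContinuousOn.div_const ?_ _)
          exact ((hUc.comp continuous_snd.continuousOn (fun p hp => hp.2)).sub
            (hUc.comp continuous_fst.continuousOn (fun p hp => hp.1))).pow k
        · intro p hp1 hp2
          rw [abs_mul]
          exact mul_le_mul (hMv p.1 (hsub le_rfl htb hp1))
            (hEbnd p.1 p.2 (hsub le_rfl htb hp1) (hsub le_rfl htb hp2))
            (abs_nonneg _) hMv0
      have hfub : (∫ r in Ioc a t, u r * ∫ s in Ioc a r, (u s * v s) * E s r)
          = ∫ s in Ioc a t, ∫ r in Ioc s t, (u s * u r) * (v s * E s r) := by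
        rw [← tri_fubini a t (fun s r => (u s * u r) * (v s * E s r)) hFint]
        refine setIntegral_congr_fun measurableSet_Ioc (fun r _ => ?_)
        rw [mul_comm, ← integral_mul_const]
        exact setIntegral_congr_fun measurableSet_Ioc (fun s _ => by ring)
      -- evaluate the inner integral
      have hinner : ∀ s ∈ Ioc a t, (∫ r in Ioc s t, (u s * u r) * (v s * E s r))
          = (u s * v s) * (∑ k ∈ Finset.range n,
              (U t - U s) ^ (k + 1) / ((k + 1).factorial : ℝ)) := by
        intro s hsm
        have hsa : a ≤ s := hsm.1.le
        have hpowint : ∀ k : ℕ, IntegrableOn (fun r => u r * (U r - U s) ^ k) (Ioc s t) := by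
          intro k
          refine key_int hsa htb _ ((U b) ^ k)
            (hmeas ((hUc.sub continuousOn_const).pow k) hsa htb) ?_
          intro x hx
          rw [abs_pow]
          exact pow_le_pow_left₀ (abs_nonneg _)
            (hUdiff x s (hsub hsa htb hx) (hsub le_rfl htb hsm)) k
        have e1 : (∫ r in Ioc s t, (u s * u r) * (v s * E s r))
            = (u s * v s) * ∫ r in Ioc s t, u r * E s r := by
          rw [← integral_const_mul]
          exact setIntegral_congr_fun measurableSet_Ioc (fun r _ => by ring)
        rw [e1]
        congr 1
        have e2 : ∀ r ∈ Ioc s t, u r * E s r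
            = ∑ k ∈ Finset.range n, (u r * (U r - U s) ^ k) * ((k.factorial : ℝ))⁻¹ := by
          intro r _
          rw [hEdef, Finset.mul_sum]
          exact Finset.sum_congr rfl (fun k _ => by ring)
        rw [setIntegral_congr_fun measurableSet_Ioc e2,
          integral_finset_sum _ (fun k _ => (hpowint k).mul_const _)]
        refine Finset.sum_congr rfl (fun k _ => ?_)
        rw [integral_mul_const, pow_id' k s t hsa hsm.2 htb, Nat.factorial_succ]
        have hk1 : ((k.factorial : ℝ)) ≠ 0 := Nat.cast_ne_zero.2 k.factorial_ne_zero
        have hk2 : ((k : ℝ) + 1) ≠ 0 := by positivity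
        push_cast
        field_simp
      -- evaluate the remainder integral
      have hremval : (∫ r in Ioc a t, u r * (M₀ * U r ^ n / (n.factorial : ℝ)))
          = M₀ * U t ^ (n + 1) / ((n + 1).factorial : ℝ) := by
        have e3 : ∀ r ∈ Ioc a t, u r * (M₀ * U r ^ n / (n.factorial : ℝ))
            = (u r * (U r - U a) ^ n) * (M₀ / (n.factorial : ℝ)) := by
          intro r _
          rw [hUa, sub_zero]
          ring
        rw [setIntegral_congr_fun measurableSet_Ioc e3, integral_mul_const,
          pow_id' n a t le_rfl hta htb, hUa, sub_zero, Nat.factorial_succ]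
        have hk1 : ((n.factorial : ℝ)) ≠ 0 := Nat.cast_ne_zero.2 n.factorial_ne_zero
        have hk2 : ((n : ℝ) + 1) ≠ 0 := by positivity
        push_cast
        field_simp
      -- assemble everything
      have hsplit2 : D (n + 1) t = (∫ x in Ioc a t, u x * v x)
          + ((∫ r in Ioc a t, u r * ∫ s in Ioc a r, (u s * v s) * E s r)
            + ∫ r in Ioc a t, u r * (M₀ * U r ^ n / (n.factorial : ℝ))) := by
        rw [hDs n t]
        rw [setIntegral_congr_fun measurableSet_Ioc
          (g := fun r => u r * v r + (u r * (∫ s in Ioc a r, (u s * v s) * E s r)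
            + u r * (M₀ * U r ^ n / (n.factorial : ℝ)))) (fun r hr => by
              rw [hA r (hsub le_rfl htb hr)]; ring)]
        have hsum : IntegrableOn (fun r => (u r * ∫ s in Ioc a r, (u s * v s) * E s r)
            + u r * (M₀ * U r ^ n / (n.factorial : ℝ))) (Ioc a t) := hmain.add hrem
        rw [integral_add huv hsum, integral_add hmain hrem]
      rw [hsplit2, hfub, setIntegral_congr_fun measurableSet_Ioc hinner]
      have hpull2 : (∫ s in Ioc a t, (u s * v s) * (∑ k ∈ Finset.range n,
            (U t - U s) ^ (k + 1) / ((k + 1).factorial : ℝ)))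
          = ∑ k ∈ Finset.range n,
            ∫ x in Ioc a t, (u x * v x) * ((U t - U x) ^ (k + 1) / ((k + 1).factorial : ℝ)) := by
        rw [← integral_finset_sum _ (fun k _ =>
          huvφ htb _ ((U b) ^ (k + 1)) (hψcont (U t) (k + 1)) (hψbnd t ht (k + 1)))]
        exact setIntegral_congr_fun measurableSet_Ioc (fun x _ => by rw [Finset.mul_sum])
      rw [hpull2, hremval]
      rw [Finset.sum_range_succ' (fun k =>
        ∫ x in Ioc a t, (u x * v x) * ((U t - U x) ^ k / (k.factorial : ℝ))) n]
      have hzero : (∫ x in Ioc a t, (u x * v x) * ((U t - U x) ^ 0 / ((0:ℕ).factorial : ℝ)))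
          = ∫ x in Ioc a t, u x * v x := by
        refine setIntegral_congr_fun measurableSet_Ioc (fun x _ => ?_)
        simp
      rw [hzero]
      ring
  -- now fix t and pass to the limit
  intro t ht
  have hta : a ≤ t := ht.1
  have htb : t ≤ b := ht.2
  have hexpK : ContinuousOn (fun s => Real.exp (U t - U s)) (Icc a b) :=
    Real.continuous_exp.comp_continuousOn (continuousOn_const.sub hUc)
  have hexpKb : ∀ x ∈ Icc a b, |Real.exp (U t - U x)| ≤ Real.exp (U b) := by
    intro x hx
    rw [abs_of_nonneg (Real.exp_nonneg _)]
    exact Real.exp_le_exp.2 ((le_abs_self _).trans (hUdiff t x ht hx))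
  set L : ℝ := ∫ s in Ioc a t, (u s * v s) * Real.exp (U t - U s) with hLdef
  have hCL : C t ≤ L := by
    have hpullt : ∀ n : ℕ, (∑ k ∈ Finset.range n,
        ∫ x in Ioc a t, (u x * v x) * ((U t - U x) ^ k / (k.factorial : ℝ)))
        = ∫ x in Ioc a t, (u x * v x)
            * (∑ k ∈ Finset.range n, (U t - U x) ^ k / (k.factorial : ℝ)) := by
      intro n
      rw [← integral_finset_sum _ (fun k _ =>
        huvφ htb _ ((U b) ^ k) (hψcont (U t) k) (hψbnd t ht k))]
      exact setIntegral_congr_fun measurableSet_Ioc (fun x _ => by rw [Finset.mul_sum])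
    have hsum_bnd : ∀ (n : ℕ) (x : ℝ), x ∈ Icc a b →
        |∑ k ∈ Finset.range n, (U t - U x) ^ k / (k.factorial : ℝ)| ≤ Real.exp (U b) := by
      intro n x hx
      calc |∑ k ∈ Finset.range n, (U t - U x) ^ k / (k.factorial : ℝ)|
          ≤ ∑ k ∈ Finset.range n, |(U t - U x) ^ k / (k.factorial : ℝ)| :=
            Finset.abs_sum_le_sum_abs _ _
        _ = ∑ k ∈ Finset.range n, |U t - U x| ^ k / (k.factorial : ℝ) := by
            refine Finset.sum_congr rfl (fun k _ => ?_)
            rw [abs_div, abs_pow, abs_of_nonneg (by positivity : (0:ℝ) ≤ (k.factorial : ℝ))]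
        _ ≤ Real.exp |U t - U x| := Real.sum_le_exp_of_nonneg (abs_nonneg _) n
        _ ≤ Real.exp (U b) := Real.exp_le_exp.2 (hUdiff t x ht hx)
    have hDCT : Tendsto (fun n => ∫ x in Ioc a t, (u x * v x)
        * (∑ k ∈ Finset.range n, (U t - U x) ^ k / (k.factorial : ℝ))) atTop (nhds L) := by
      refine tendsto_integral_of_dominated_convergence
        (fun x => |u x| * (Mv * Real.exp (U b))) (fun n => ?_) ?_ (fun n => ?_) ?_
      · exact (huvφ htb _ (Real.exp (U b)) (continuousOn_finset_sum _
          (fun k _ => ((continuousOn_const.sub hUc).pow k).div_const _))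
          (fun x hx => hsum_bnd n x hx)).aestronglyMeasurable
      · exact ((hu_int' le_rfl htb).abs).mul_const _
      · rw [ae_restrict_iff' measurableSet_Ioc]
        refine ae_of_all _ (fun x hx => ?_)
        have hx' := hsub le_rfl htb hx
        rw [Real.norm_eq_abs, abs_mul, abs_mul, mul_assoc]
        refine mul_le_mul_of_nonneg_left ?_ (abs_nonneg _)
        exact mul_le_mul (hMv x hx') (hsum_bnd n x hx') (abs_nonneg _) hMv0
      · refine ae_of_all _ (fun x => ?_)
        exact (hexp_sum (U t - U x)).const_mul _
    have hR : Tendsto (fun n : ℕ => M₀ * U t ^ n / (n.factorial : ℝ)) atTop (nhds 0) := by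
      simp_rw [mul_div_assoc]
      simpa using (FloorSemiring.tendsto_pow_div_factorial_atTop (U t)).const_mul M₀
    have hDlim : Tendsto (fun n => D n t) atTop (nhds L) := by
      have he : (fun n => D n t) = fun n => (∑ k ∈ Finset.range n,
          ∫ x in Ioc a t, (u x * v x) * ((U t - U x) ^ k / (k.factorial : ℝ)))
          + M₀ * U t ^ n / (n.factorial : ℝ) := funext (fun n => hDclosed n t ht)
      rw [he]
      have := hDCT.add hR
      rw [add_zero] at this
      refine Tendsto.congr (fun n => ?_) this
      rw [hpullt n]
    exact ge_of_tendsto' hDlim (fun n => hCD n t ht)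
  have hwt : w t ≤ v t + L := by
    have := hwleC t ht
    linarith [hCL]
  -- integrability pieces for the final rearrangement
  have hKint : IntegrableOn (fun s => u s * Real.exp (U t - U s)) (Ioc a t) :=
    key_int le_rfl htb _ (Real.exp (U b)) (hmeas hexpK le_rfl htb)
      (fun x hx => hexpKb x (hsub le_rfl htb hx))
  have hPc : ContinuousOn (fun x => ∫ r in Ioc a x, v' r) (Icc a b) :=
    intervalIntegral.continuousOn_primitive hv'_int
  have hPb : ∀ x ∈ Icc a b, |∫ r in Ioc a x, v' r| ≤ ∫ r in Icc a b, |v' r| := by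
    intro x hx
    have h1 : |∫ r in Ioc a x, v' r| ≤ ∫ r in Ioc a x, |v' r| := by
      have := norm_integral_le_integral_norm (μ := volume.restrict (Ioc a x)) v'
      simpa [Real.norm_eq_abs] using this
    have h2 : (∫ r in Ioc a x, |v' r|) ≤ ∫ r in Icc a b, |v' r| := by
      refine setIntegral_mono_set hv'_int.abs ?_ ((hsub le_rfl hx.2).eventuallyLE)
      exact (ae_restrict_iff' measurableSet_Icc).2 (ae_of_all _ (fun y _ => abs_nonneg _))
    linarith
  have hsecond_int : IntegrableOn
      (fun s => (u s * Real.exp (U t - U s)) * (∫ r in Ioc a s, v' r)) (Ioc a t) := by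
    have h := key_int le_rfl htb
      (fun s => Real.exp (U t - U s) * ∫ r in Ioc a s, v' r)
      (Real.exp (U b) * ∫ r in Icc a b, |v' r|)
      (hmeas (hexpK.mul hPc) le_rfl htb) ?_
    · exact h.congr (ae_of_all _ (fun x => by ring))
    · intro x hx
      have hx' := hsub le_rfl htb hx
      rw [abs_mul]
      exact mul_le_mul (hexpKb x hx') (hPb x hx') (abs_nonneg _) (Real.exp_nonneg _)
  have hv'K : IntegrableOn (fun r => v' r * Real.exp (U t - U r)) (Ioc a t) := by
    have h := Integrable.bdd_mul (μ := volume.restrict (Ioc a t)) (c := Real.exp (U b))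
      (hv'_int.mono_set (hsub le_rfl htb)) (hmeas hexpK le_rfl htb)
      (((ae_restrict_iff' measurableSet_Ioc).2 (ae_of_all _ (fun x hx => by
        rw [Real.norm_eq_abs]; exact hexpKb x (hsub le_rfl htb hx)))))
    exact h.congr (ae_of_all _ (fun x => mul_comm _ _))
  have hF2int : Integrable (fun p : ℝ × ℝ => v' p.1 * (u p.2 * Real.exp (U t - U p.2)))
      ((volume.restrict (Ioc a t)).prod (volume.restrict (Ioc a t))) :=
    Integrable.mul_prod (hv'_int.mono_set (hsub le_rfl htb)) hKint
  -- the FTC representation of v on Ioc-integrals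
  have hvs : ∀ s ∈ Icc a b, v s = v a + ∫ r in Ioc a s, v' r := by
    intro s hs
    rw [hv_ftc s hs, intervalIntegral.integral_of_le hs.1]
  -- main rearrangement of L
  have hfub2 : (∫ s in Ioc a t, (u s * Real.exp (U t - U s)) * (∫ r in Ioc a s, v' r))
      = ∫ r in Ioc a t, ∫ s in Ioc r t, v' r * (u s * Real.exp (U t - U s)) := by
    have e : ∀ s ∈ Ioc a t, (u s * Real.exp (U t - U s)) * (∫ r in Ioc a s, v' r)
        = ∫ r in Ioc a s, v' r * (u s * Real.exp (U t - U s)) := by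
      intro s _
      rw [integral_mul_const]
      ring
    rw [setIntegral_congr_fun measurableSet_Ioc e,
      tri_fubini a t (fun r s => v' r * (u s * Real.exp (U t - U s))) hF2int]
  have hinner2 : ∀ r ∈ Ioc a t, (∫ s in Ioc r t, v' r * (u s * Real.exp (U t - U s)))
      = v' r * (Real.exp (U t - U r) - 1) := by
    intro r hr
    rw [integral_const_mul, exp_id r t hr.1.le hr.2 htb]
  have hsub2 : (∫ r in Ioc a t, v' r * (Real.exp (U t - U r) - 1))
      = (∫ r in Ioc a t, v' r * Real.exp (U t - U r)) - ∫ r in Ioc a t, v' r := by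
    have e : ∀ r ∈ Ioc a t, v' r * (Real.exp (U t - U r) - 1)
        = v' r * Real.exp (U t - U r) - v' r := fun r _ => by ring
    rw [setIntegral_congr_fun measurableSet_Ioc e,
      integral_sub hv'K (hv'_int.mono_set (hsub le_rfl htb))]
  have hL : L = v a * (Real.exp (U t) - 1)
      + ((∫ r in Ioc a t, v' r * Real.exp (U t - U r)) - ∫ r in Ioc a t, v' r) := by
    have e : ∀ s ∈ Ioc a t, (u s * v s) * Real.exp (U t - U s)
        = v a * (u s * Real.exp (U t - U s))
          + (u s * Real.exp (U t - U s)) * (∫ r in Ioc a s, v' r) := by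
      intro s hs
      rw [hvs s (hsub le_rfl htb hs)]
      ring
    rw [hLdef, setIntegral_congr_fun measurableSet_Ioc e,
      integral_add (hKint.const_mul _) hsecond_int, integral_const_mul, hfub2,
      setIntegral_congr_fun measurableSet_Ioc hinner2, hsub2]
    have hexpa : (∫ s in Ioc a t, u s * Real.exp (U t - U s)) = Real.exp (U t) - 1 := by
      have := exp_id a t le_rfl hta htb
      rwa [hUa, sub_zero] at this
    rw [hexpa]
  -- convert the goal
  have hvt : v t = v a + ∫ r in Ioc a t, v' r := hvs t ht
  have hgoal1 : (∫ s in a..t, u s) = U t := intervalIntegral.integral_of_le hta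
  have hgoal2 : (∫ s in a..t, Real.exp (∫ r in s..t, u r) * v' s)
      = ∫ r in Ioc a t, v' r * Real.exp (U t - U r) := by
    rw [intervalIntegral.integral_of_le hta]
    refine setIntegral_congr_fun measurableSet_Ioc (fun s hs => ?_)
    rw [intervalIntegral.integral_of_le hs.2, ← hUsub hs.1.le hs.2 htb]
    ring
  rw [hgoal1, hgoal2]
  have : v t + L = v a * Real.exp (U t) + ∫ r in Ioc a t, v' r * Real.exp (U t - U r) := by
    rw [hL, hvt]
    ring
  linarith [hwt]
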